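/- Consider the bid-update game where each user i's best response to opponents' bids is B_i(b_{-i}) = f_i·(Σ_{j≠i} b_j + β) with fixed coefficients f_i ∈ [0,∞) and β > 0. A nonnegative fixed point b* (Nash equilibrium) with the induced proportional power allocation satisfying Σ_i P_i* < P_total exists and is unique whenever Σ_i f_i/(f_i+1) < 1; in that case b_i* = (f_i/(f_i+1))·β / (1 − Σ_j f_j/(f_j+1)). -/

import Mathlib

/-- In the linear best-response bid game B_i(b_{-i}) = f_i·(Σ_{j≠i} b_j + β)
with f_i ≥ 0 and β > 0, if Σ_i f_i/(f_i+1) < 1 then a nonnegative Nash equilibrium (fixed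
point) exists and is unique; it is given by b_i* = (f_i/(f_i+1))·β/(1 − Σ_j f_j/(f_j+1)),
and the induced proportional allocation satisfies Σ_i P_i* < P_total. -/
theorem linear_bid_game_NE_exists_unique
    (I : ℕ) (f : Fin I → ℝ) (β Ptot : ℝ)
    (hf : ∀ i, 0 ≤ f i) (hβ : 0 < β) (hPtot : 0 < Ptot)
    (hsum : (∑ i, f i / (f i + 1)) < 1) :
    (∃! b : Fin I → ℝ, (∀ i, 0 ≤ b i) ∧
        ∀ i, b i = f i * ((∑ j ∈ Finset.univ.erase i, b j) + β)) ∧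
    (∀ b : Fin I → ℝ, ((∀ i, 0 ≤ b i) ∧
        ∀ i, b i = f i * ((∑ j ∈ Finset.univ.erase i, b j) + β)) →
      (∀ i, b i = (f i / (f i + 1)) * β / (1 - ∑ j, f j / (f j + 1))) ∧
      (∑ i, b i * Ptot / ((∑ j, b j) + β)) < Ptot) := by
  set g : Fin I → ℝ := fun i => f i / (f i + 1) with hg
  set G : ℝ := ∑ i, g i with hGdef
  have hf1 : ∀ i, (0:ℝ) < f i + 1 := fun i => by linarith [hf i]
  have hgnn : ∀ i, 0 ≤ g i := fun i => div_nonneg (hf i) (hf1 i).le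
  have hG0 : 0 ≤ G := Finset.sum_nonneg fun i _ => hgnn i
  have hG1 : G < 1 := hsum
  have h1G : (0:ℝ) < 1 - G := by linarith
  -- key uniqueness lemma
  have key : ∀ b : Fin I → ℝ,
      (∀ i, b i = f i * ((∑ j ∈ Finset.univ.erase i, b j) + β)) →
      (∀ i, b i = g i * β / (1 - G)) ∧ (∑ j, b j) + β = β / (1 - G) := by
    intro b hb
    set S : ℝ := ∑ j, b j with hS
    have herase : ∀ i : Fin I, ∑ j ∈ Finset.univ.erase i, b j = S - b i := by
      intro i
      rw [Finset.sum_erase_eq_sub (Finset.mem_univ i)]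
    have hbi : ∀ i, b i = g i * (S + β) := by
      intro i
      have h := hb i
      rw [herase i] at h
      have hne : f i + 1 ≠ 0 := (hf1 i).ne'
      rw [hg]
      field_simp
      nlinarith [h]
    have hSum : S = G * (S + β) := by
      rw [hS]
      calc ∑ j, b j = ∑ j, g j * (S + β) := by
            exact Finset.sum_congr rfl fun j _ => hbi j
        _ = G * (S + β) := by rw [hGdef, Finset.sum_mul]
    have hSval : S + β = β / (1 - G) := by
      rw [eq_div_iff h1G.ne']
      nlinarith [hSum]
    constructor
    · intro i
      rw [hbi i, hSval, mul_div_assoc]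
    · exact hSval
  -- the explicit equilibrium
  set bstar : Fin I → ℝ := fun i => g i * β / (1 - G) with hbstar
  have hbstarnn : ∀ i, 0 ≤ bstar i := fun i =>
    div_nonneg (mul_nonneg (hgnn i) hβ.le) h1G.le
  have hSstar : (∑ j, bstar j) = G * β / (1 - G) := by
    rw [hbstar, hGdef, ← Finset.sum_div, ← Finset.sum_mul]
  have hbstareq : ∀ i, bstar i = f i * ((∑ j ∈ Finset.univ.erase i, bstar j) + β) := by
    intro i
    rw [Finset.sum_erase_eq_sub (Finset.mem_univ i), hSstar, hbstar]
    have hne : f i + 1 ≠ 0 := (hf1 i).ne'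
    simp only [hg]
    field_simp
    ring
  constructor
  · refine ⟨bstar, ⟨hbstarnn, hbstareq⟩, ?_⟩
    intro b ⟨_, hb⟩
    funext i
    rw [(key b hb).1 i]
  · intro b ⟨hbnn, hb⟩
    obtain ⟨hval, hSval⟩ := key b hb
    refine ⟨hval, ?_⟩
    have hSum : (∑ j, b j) = G * β / (1 - G) := by
      have := hSval
      field_simp at this ⊢
      linarith
    have hden : (0:ℝ) < (∑ j, b j) + β := by rw [hSval]; positivity
    calc (∑ i, b i * Ptot / ((∑ j, b j) + β))
        = (∑ j, b j) * Ptot / ((∑ j, b j) + β) := by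
          rw [← Finset.sum_div, ← Finset.sum_mul]
      _ = G * Ptot := by
          rw [hSval, hSum]; field_simp
      _ < Ptot := by nlinarith
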